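/- For c > 0, define g₊(c) = (1 + √(1+16c))/4, g₋(c) = (1 − √(1+16c))/4, A₊(c) = −1/2 + 1/(2√(1+16c)), A₋(c) = −1/2 − 1/(2√(1+16c)). Then the solution f_c of f_c'(r) = cr/(f_c(r) − r/2), f_c(0) = 1/2 satisfies f_c(r) = r·g_c(r) for r ∈ (0,1], where g_c(r) is the unique element of (g₊(c), ∞) with (1/2)(g_c(r) − g₊(c))^{A₊(c)} (g_c(r) − g₋(c))^{A₋(c)} = r. -/

import Mathlib

open Set Filter Real Topology

noncomputable def Fc (s : ℝ) : ℝ → ℝ := fun g =>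
  (1/2) * (g - (1+s)/4) ^ (-(1:ℝ)/2 + 1/(2*s)) * (g - (1-s)/4) ^ (-(1:ℝ)/2 - 1/(2*s))

lemma Fc_pos {s : ℝ} (hs : 1 < s) {g : ℝ} (hg : (1+s)/4 < g) : 0 < Fc s g := by
  have h1 : (0:ℝ) < g - (1+s)/4 := by linarith
  have h2 : (0:ℝ) < g - (1-s)/4 := by linarith
  have := Real.rpow_pos_of_pos h1 (-(1:ℝ)/2 + 1/(2*s))
  have := Real.rpow_pos_of_pos h2 (-(1:ℝ)/2 - 1/(2*s))
  unfold Fc; positivity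

lemma Fc_hasDerivAt {s : ℝ} (hs : 1 < s) {g : ℝ} (hg : (1+s)/4 < g) :
    HasDerivAt (Fc s)
      (Fc s g * ((-(1:ℝ)/2 + 1/(2*s))/(g-(1+s)/4) + (-(1:ℝ)/2 - 1/(2*s))/(g-(1-s)/4))) g := by
  have h1 : (0:ℝ) < g - (1+s)/4 := by linarith
  have h2 : (0:ℝ) < g - (1-s)/4 := by linarith
  set a := -(1:ℝ)/2 + 1/(2*s) with ha
  set b := -(1:ℝ)/2 - 1/(2*s) with hb
  have d1 : HasDerivAt (fun g : ℝ => (g - (1+s)/4) ^ a)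
      (a * (g - (1+s)/4) ^ (a - 1)) g := by
    have := (Real.hasDerivAt_rpow_const (x := g - (1+s)/4) (p := a) (Or.inl h1.ne')).comp g
      ((hasDerivAt_id g).sub_const ((1+s)/4))
    simp only [mul_one] at this; exact this
  have d2 : HasDerivAt (fun g : ℝ => (g - (1-s)/4) ^ b)
      (b * (g - (1-s)/4) ^ (b - 1)) g := by
    have := (Real.hasDerivAt_rpow_const (x := g - (1-s)/4) (p := b) (Or.inl h2.ne')).comp g
      ((hasDerivAt_id g).sub_const ((1-s)/4))
    simp only [mul_one] at this; exact this
  have d := (d1.const_mul ((1:ℝ)/2)).mul d2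
  convert d using 1
  · rfl
  · rfl
  · rfl
  have e1 : (g - (1+s)/4) ^ (a - 1) = (g - (1+s)/4) ^ a / (g - (1+s)/4) := by
    rw [Real.rpow_sub h1, Real.rpow_one]
  have e2 : (g - (1-s)/4) ^ (b - 1) = (g - (1-s)/4) ^ b / (g - (1-s)/4) := by
    rw [Real.rpow_sub h2, Real.rpow_one]
  rw [e1, e2]
  unfold Fc
  rw [← ha, ← hb]
  clear_value a b
  generalize (g - (1+s)/4) ^ a = X
  generalize (g - (1-s)/4) ^ b = Y
  generalize (g - (1+s)/4) = D1 at *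
  generalize (g - (1-s)/4) = D2 at *
  ring

lemma Fc_deriv_neg {s : ℝ} (hs : 1 < s) {g : ℝ} (hg : (1+s)/4 < g) :
    Fc s g * ((-(1:ℝ)/2 + 1/(2*s))/(g-(1+s)/4) + (-(1:ℝ)/2 - 1/(2*s))/(g-(1-s)/4)) < 0 := by
  have h1 : (0:ℝ) < g - (1+s)/4 := by linarith
  have h2 : (0:ℝ) < g - (1-s)/4 := by linarith
  have hs0 : (0:ℝ) < s := by linarith
  have ha : (-(1:ℝ)/2 + 1/(2*s)) < 0 := by
    have : 1/(2*s) < 1/2 := by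
      apply div_lt_div_of_pos_left <;> linarith
    linarith
  have hb : (-(1:ℝ)/2 - 1/(2*s)) < 0 := by
    have : 0 < 1/(2*s) := by positivity
    linarith
  have := Fc_pos hs hg
  have t1 : (-(1:ℝ)/2 + 1/(2*s))/(g-(1+s)/4) < 0 := div_neg_of_neg_of_pos ha h1
  have t2 : (-(1:ℝ)/2 - 1/(2*s))/(g-(1-s)/4) < 0 := div_neg_of_neg_of_pos hb h2
  exact mul_neg_of_pos_of_neg this (by linarith)

lemma Fc_strictAntiOn {s : ℝ} (hs : 1 < s) : StrictAntiOn (Fc s) (Ioi ((1+s)/4)) := by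
  apply strictAntiOn_of_deriv_neg (convex_Ioi _)
  · intro g hg
    exact (Fc_hasDerivAt hs hg).continuousAt.continuousWithinAt
  · intro g hg
    rw [interior_Ioi] at hg
    rw [(Fc_hasDerivAt hs hg).deriv]
    exact Fc_deriv_neg hs hg

lemma key_alg {c s : ℝ} (hs : 1 < s) (hsc : s^2 = 1 + 16*c) {g : ℝ} (hg : (1+s)/4 < g) :
    ((-(1:ℝ)/2 + 1/(2*s))/(g-(1+s)/4) + (-(1:ℝ)/2 - 1/(2*s))/(g-(1-s)/4))
      * (c/(g-1/2) - g) = 1 := by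
  have h1 : (0:ℝ) < g - (1+s)/4 := by linarith
  have h2 : (0:ℝ) < g - (1-s)/4 := by linarith
  have h3 : (0:ℝ) < g - 1/2 := by linarith
  have hs0 : (0:ℝ) < s := by linarith
  have hcs : c = (s^2 - 1)/16 := by linarith
  have e1 : c/(g-1/2) - g = -((g-(1+s)/4)*(g-(1-s)/4))/(g-1/2) := by
    rw [hcs, div_sub' h3.ne', div_eq_div_iff h3.ne' h3.ne']
    ring
  have e2 : ((-(1:ℝ)/2 + 1/(2*s))/(g-(1+s)/4) + (-(1:ℝ)/2 - 1/(2*s))/(g-(1-s)/4))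
      = -(g-1/2)/((g-(1+s)/4)*(g-(1-s)/4)) := by
    rw [div_add_div _ _ h1.ne' h2.ne', div_eq_div_iff (by positivity) (by positivity)]
    rw [mul_eq_mul_right_iff]
    left
    field_simp
    ring
  rw [e1, e2, div_mul_div_comm]
  rw [div_eq_one_iff_eq (by positivity)]
  ring


lemma rpow_tendsto_top {a : ℝ} (ha : a < 0) :
    Tendsto (fun x : ℝ => x ^ a) (𝓝[>] (0:ℝ)) atTop := by
  have h1 : Tendsto (fun x : ℝ => x ^ (-a)) (𝓝[>] (0:ℝ)) (𝓝[>] (0:ℝ)) := by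
    apply tendsto_nhdsWithin_of_tendsto_nhds_of_eventually_within
    · have := (Real.continuousAt_rpow_const 0 (-a) (Or.inr (by linarith))).tendsto
      rw [Real.zero_rpow (by linarith : -a ≠ 0)] at this
      exact this.mono_left nhdsWithin_le_nhds
    · filter_upwards [self_mem_nhdsWithin] with x hx
      exact Real.rpow_pos_of_pos hx _
  have h2 := h1.inv_tendsto_nhdsGT_zero
  refine h2.congr' ?_
  filter_upwards [self_mem_nhdsWithin] with x hx
  simp only [Pi.inv_apply]
  rw [← Real.rpow_neg (le_of_lt hx), neg_neg]

lemma Fc_tendsto_atTop {s : ℝ} (hs : 1 < s) :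
    Tendsto (Fc s) (𝓝[>] ((1+s)/4)) atTop := by
  set P := (1+s)/4 with hP
  set a := -(1:ℝ)/2 + 1/(2*s) with ha
  set b := -(1:ℝ)/2 - 1/(2*s) with hb
  have hs0 : (0:ℝ) < s := by linarith
  have haneg : a < 0 := by
    rw [ha]
    have : 1/(2*s) < 1/2 := by apply div_lt_div_of_pos_left <;> linarith
    linarith
  have t1 : Tendsto (fun g => (g - P) ^ a) (𝓝[>] P) atTop := by
    have hsub : Tendsto (fun g : ℝ => g - P) (𝓝[>] P) (𝓝[>] (0:ℝ)) := by
      apply tendsto_nhdsWithin_of_tendsto_nhds_of_eventually_within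
      · simpa using (tendsto_id (x := 𝓝 P)).sub_const P |>.mono_left nhdsWithin_le_nhds
      · filter_upwards [self_mem_nhdsWithin] with x hx
        simpa [sub_pos] using hx
    exact (rpow_tendsto_top haneg).comp hsub
  have t2 : Tendsto (fun g => (1/2) * (g - (1-s)/4) ^ b) (𝓝[>] P)
      (𝓝 ((1/2) * (P - (1-s)/4) ^ b)) := by
    have hc : ContinuousAt (fun g : ℝ => (1/2) * (g - (1-s)/4) ^ b) P := by
      apply ContinuousAt.mul continuousAt_const
      exact (continuousAt_id.sub continuousAt_const).rpow_const
        (Or.inl (by simp only [Pi.sub_apply, id_eq]; rw [hP]; intro h; nlinarith [h]))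
    exact hc.tendsto.mono_left nhdsWithin_le_nhds
  have hpos : 0 < (1/2) * (P - (1-s)/4) ^ b := by
    have : (0:ℝ) < P - (1-s)/4 := by rw [hP]; nlinarith
    have := Real.rpow_pos_of_pos this b
    positivity
  have := (t2.pos_mul_atTop hpos t1)
  refine this.congr ?_
  intro g
  simp only [Fc, ← hP, ← ha, ← hb]
  ring


lemma Fc_mul_tendsto {s : ℝ} (hs : 1 < s) :
    Tendsto (fun g => Fc s g * g) atTop (𝓝 (1/2)) := by
  set P := (1+s)/4 with hP
  set M := (1-s)/4 with hM
  set a := -(1:ℝ)/2 + 1/(2*s) with ha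
  set b := -(1:ℝ)/2 - 1/(2*s) with hb
  have hs0 : (0:ℝ) < s := by linarith
  have hab : a + b = -1 := by rw [ha, hb]; ring
  -- limit of the normalized factors
  have l1 : Tendsto (fun g : ℝ => (1 - P/g) ^ a) atTop (𝓝 1) := by
    have h0 : Tendsto (fun g : ℝ => 1 - P/g) atTop (𝓝 1) := by
      have := tendsto_const_nhds (x := P) (f := atTop (α := ℝ)) |>.div_atTop tendsto_id
      simpa using (tendsto_const_nhds (x := (1:ℝ))).sub this
    have := h0.rpow_const (p := a) (Or.inl one_ne_zero)
    simpa using this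
  have l2 : Tendsto (fun g : ℝ => (1 - M/g) ^ b) atTop (𝓝 1) := by
    have h0 : Tendsto (fun g : ℝ => 1 - M/g) atTop (𝓝 1) := by
      have := tendsto_const_nhds (x := M) (f := atTop (α := ℝ)) |>.div_atTop tendsto_id
      simpa using (tendsto_const_nhds (x := (1:ℝ))).sub this
    have := h0.rpow_const (p := b) (Or.inl one_ne_zero)
    simpa using this
  have lmain : Tendsto (fun g : ℝ => (1/2) * ((1 - P/g) ^ a * (1 - M/g) ^ b)) atTop
      (𝓝 ((1/2) * (1 * 1))) := tendsto_const_nhds.mul (l1.mul l2)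
  rw [show ((1:ℝ)/2) * (1 * 1) = 1/2 by ring] at lmain
  refine lmain.congr' ?_
  filter_upwards [eventually_gt_atTop (max P 1)] with g hg
  have hgP : P < g := lt_of_le_of_lt (le_max_left _ _) hg
  have hg1 : (1:ℝ) < g := lt_of_le_of_lt (le_max_right _ _) hg
  have hg0 : (0:ℝ) < g := by linarith
  have hM0 : M < 1 := by rw [hM]; linarith
  have hgM : (0:ℝ) < g - M := by nlinarith
  have hfac1 : (0:ℝ) < 1 - P/g := by
    rw [sub_pos, div_lt_one hg0]; exact hgP
  have hfac2 : (0:ℝ) < 1 - M/g := by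
    rw [sub_pos, div_lt_one hg0]; linarith
  have e1 : g - P = g * (1 - P/g) := by field_simp
  have e2 : g - M = g * (1 - M/g) := by field_simp
  have r1 : (g - P) ^ a = g ^ a * (1 - P/g) ^ a := by
    rw [e1, Real.mul_rpow hg0.le hfac1.le]
  have r2 : (g - M) ^ b = g ^ b * (1 - M/g) ^ b := by
    rw [e2, Real.mul_rpow hg0.le hfac2.le]
  have epow : g ^ a * g ^ b * g = 1 := by
    rw [← Real.rpow_add hg0, hab, Real.rpow_neg_one]
    field_simp
  calc (1/2) * ((1 - P/g) ^ a * (1 - M/g) ^ b)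
      = (1/2) * ((1 - P/g) ^ a * (1 - M/g) ^ b) * (g ^ a * g ^ b * g) := by rw [epow]; ring
    _ = ((1/2) * (g ^ a * (1 - P/g) ^ a) * (g ^ b * (1 - M/g) ^ b)) * g := by ring
    _ = Fc s g * g := by rw [← r1, ← r2]; rfl


lemma solution_eq (c s : ℝ) (hc : 0 < c) (hs : 1 < s) (hsc : s^2 = 1+16*c)
    (f : ℝ → ℝ) (hf : ContinuousOn f (Icc 0 1)) (hf0 : f 0 = 1/2)
    (hder : ∀ r ∈ Ico (0:ℝ) 1, HasDerivWithinAt f (c * r / (f r - r/2)) (Icc 0 1) r)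
    (r₁ : ℝ) (hr₁ : r₁ ∈ Ioc (0:ℝ) 1)
    (hpos : ∀ t ∈ Ioo (0:ℝ) r₁, (1+s)/4 < f t / t) :
    ∀ r ∈ Ioo (0:ℝ) r₁, Fc s (f r / r) = r := by
  set P := (1+s)/4 with hP
  have hP2 : (1/2 : ℝ) < P := by rw [hP]; linarith
  set Φ : ℝ → ℝ := fun t => Fc s (f t / t) / t with hΦ
  -- derivative zero
  have hΦd : ∀ t ∈ Ioo (0:ℝ) r₁, HasDerivAt Φ 0 t := by
    intro t ht
    obtain ⟨ht0, htr⟩ := ht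
    have ht1 : t < 1 := lt_of_lt_of_le htr hr₁.2
    have hft : HasDerivAt f (c * t / (f t - t/2)) t :=
      (hder t ⟨ht0.le, ht1⟩).hasDerivAt (Icc_mem_nhds ht0 ht1)
    have hg : P < f t / t := hpos t ⟨ht0, htr⟩
    have hgt : P * t < f t := (lt_div_iff₀ ht0).mp hg
    have hft2 : (0:ℝ) < f t - t/2 := by nlinarith
    have hG : HasDerivAt (fun u => f u / u)
        ((c * t / (f t - t/2) * t - f t * 1) / t ^ 2) t :=
      hft.div (hasDerivAt_id t) ht0.ne'
    have hFG := HasDerivAt.comp (h := fun u => f u / u) (x := t)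
      (hh₂ := Fc_hasDerivAt hs hg) (hh := hG)
    have hfull := hFG.div (hasDerivAt_id t) ht0.ne'
    have : ((Fc s (f t / t) *
        ((-(1:ℝ)/2 + 1/(2*s))/(f t / t - P) + (-(1:ℝ)/2 - 1/(2*s))/(f t / t - (1-s)/4))) *
          ((c * t / (f t - t/2) * t - f t * 1) / t ^ 2) * t - Fc s (f t / t) * 1) / t ^ 2
        = 0 := by
      rw [div_eq_zero_iff]; left
      have e1 : c * t / (f t - t/2) = c / (f t / t - 1/2) := by
        rw [div_eq_div_iff hft2.ne' (by linarith : f t / t - 1/2 ≠ 0)]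
        field_simp
      have e2 : ((c / (f t / t - 1/2)) * t - f t * 1) / t ^ 2 * t
          = c / (f t / t - 1/2) - f t / t := by
        field_simp
      rw [e1]
      have key := key_alg (c := c) hs hsc hg
      calc Fc s (f t / t) *
          ((-(1:ℝ)/2 + 1/(2*s))/(f t / t - P) + (-(1:ℝ)/2 - 1/(2*s))/(f t / t - (1-s)/4)) *
          ((c / (f t / t - 1/2) * t - f t * 1) / t ^ 2) * t - Fc s (f t / t) * 1
          = Fc s (f t / t) *
            (((-(1:ℝ)/2 + 1/(2*s))/(f t / t - P) + (-(1:ℝ)/2 - 1/(2*s))/(f t / t - (1-s)/4)) *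
            ((c / (f t / t - 1/2) * t - f t * 1) / t ^ 2 * t)) - Fc s (f t / t) := by ring
        _ = 0 := by rw [e2, key]; ring
    have hfull2 : HasDerivAt Φ (((Fc s (f t / t) *
        ((-(1:ℝ)/2 + 1/(2*s))/(f t / t - P) + (-(1:ℝ)/2 - 1/(2*s))/(f t / t - (1-s)/4))) *
          ((c * t / (f t - t/2) * t - f t * 1) / t ^ 2) * t - Fc s (f t / t) * 1) / t ^ 2) t :=
      hfull
    rwa [this] at hfull2
  -- Φ is constant on Ioo 0 r₁
  have hconst : ∀ x ∈ Ioo (0:ℝ) r₁, ∀ y ∈ Ioo (0:ℝ) r₁, Φ x = Φ y := by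
    have key : ∀ x y, x ∈ Ioo (0:ℝ) r₁ → y ∈ Ioo (0:ℝ) r₁ → x ≤ y → Φ y = Φ x := by
      intro x y hx hy hxy
      have hsub : Icc x y ⊆ Ioo (0:ℝ) r₁ := fun z hz =>
        ⟨lt_of_lt_of_le hx.1 hz.1, lt_of_le_of_lt hz.2 hy.2⟩
      have := constant_of_has_deriv_right_zero (f := Φ) (a := x) (b := y)
        (fun z hz => (hΦd z (hsub hz)).continuousAt.continuousWithinAt)
        (fun z hz => (hΦd z (hsub ⟨hz.1, hz.2.le⟩)).hasDerivWithinAt)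
      exact this y (right_mem_Icc.mpr hxy)
    intro x hx y hy
    rcases le_total x y with h | h
    · exact (key x y hx hy h).symm
    · exact key y x hy hx h
  -- the limit of Φ at 0+ is 1
  set l := 𝓝[Ioo (0:ℝ) r₁] (0:ℝ) with hl
  have hlne : l.NeBot := by
    rw [hl]
    apply mem_closure_iff_nhdsWithin_neBot.mp
    rw [closure_Ioo hr₁.1.ne]
    exact ⟨le_refl _, hr₁.1.le⟩
  have hfl : Tendsto f l (𝓝 (1/2)) := by
    have h0 : (0:ℝ) ∈ Icc (0:ℝ) 1 := by constructor <;> norm_num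
    have h1 := (hf 0 h0).tendsto
    rw [hf0] at h1
    exact h1.mono_left (nhdsWithin_mono 0 (fun z hz => ⟨hz.1.le, hz.2.le.trans hr₁.2⟩))
  have hinv : Tendsto (fun t : ℝ => t⁻¹) l atTop :=
    tendsto_inv_nhdsGT_zero.mono_left (nhdsWithin_mono 0 (fun z hz => hz.1))
  have hGtop : Tendsto (fun t => f t / t) l atTop := by
    have := Filter.Tendsto.pos_mul_atTop (by norm_num : (0:ℝ) < 1/2) hfl hinv
    refine this.congr (fun t => ?_)
    rw [div_eq_mul_inv]
  have hFcG : Tendsto (fun t => Fc s (f t / t) * (f t / t)) l (𝓝 (1/2)) :=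
    (Fc_mul_tendsto hs).comp hGtop
  have hΦl : Tendsto Φ l (𝓝 1) := by
    have h2 : Tendsto (fun t => (Fc s (f t / t) * (f t / t)) / f t) l (𝓝 ((1/2) / (1/2))) :=
      hFcG.div hfl (by norm_num)
    norm_num at h2
    refine Tendsto.congr' ?_ h2
    filter_upwards [self_mem_nhdsWithin] with t ht
    have ht0 : (0:ℝ) < t := ht.1
    have hgP : P < f t / t := hpos t ht
    have hPpos : (0:ℝ) < P := by linarith
    have hft0 : (0:ℝ) < f t := by
      have := (lt_div_iff₀ ht0).mp hgP
      nlinarith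
    show Fc s (f t / t) * (f t / t) / f t = Fc s (f t / t) / t
    rw [mul_div_assoc]
    have e : f t / t / f t = 1/t := by
      rw [div_div, mul_comm, ← div_div, div_self hft0.ne']
    rw [e]
    ring
  -- conclude
  intro r hr
  have h1 : Tendsto Φ l (𝓝 (Φ r)) := by
    refine tendsto_const_nhds.congr' ?_
    filter_upwards [self_mem_nhdsWithin] with t ht
    exact hconst r hr t ht
  have hΦr : Φ r = 1 := tendsto_nhds_unique h1 hΦl
  have hr0 : (0:ℝ) < r := hr.1
  have : Fc s (f r / r) / r = 1 := hΦr
  rwa [div_eq_one_iff_eq hr0.ne'] at this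


theorem stmt15 (c : ℝ) (hc : 0 < c) (f : ℝ → ℝ)
    (hf : ContinuousOn f (Set.Icc 0 1)) (hf0 : f 0 = 1/2)
    (hder : ∀ r ∈ Set.Ico (0:ℝ) 1,
      HasDerivWithinAt f (c * r / (f r - r/2)) (Set.Icc 0 1) r) :
    ∀ r ∈ Set.Ioc (0:ℝ) 1,
      (1 + Real.sqrt (1 + 16*c))/4 < f r / r ∧
      (1/2) * (f r / r - (1 + Real.sqrt (1 + 16*c))/4)
          ^ (-(1:ℝ)/2 + 1/(2 * Real.sqrt (1 + 16*c)))
        * (f r / r - (1 - Real.sqrt (1 + 16*c))/4)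
          ^ (-(1:ℝ)/2 - 1/(2 * Real.sqrt (1 + 16*c))) = r ∧
      ∀ g : ℝ, (1 + Real.sqrt (1 + 16*c))/4 < g →
        (1/2) * (g - (1 + Real.sqrt (1 + 16*c))/4)
            ^ (-(1:ℝ)/2 + 1/(2 * Real.sqrt (1 + 16*c)))
          * (g - (1 - Real.sqrt (1 + 16*c))/4)
            ^ (-(1:ℝ)/2 - 1/(2 * Real.sqrt (1 + 16*c))) = r →
        g = f r / r := by
  set s := Real.sqrt (1 + 16*c) with hsdef
  have h16 : (1:ℝ) < 1 + 16*c := by linarith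
  have hs : 1 < s := by
    rw [hsdef]
    exact (Real.lt_sqrt (by linarith)).mpr (by nlinarith)
  have hsc : s^2 = 1 + 16*c := Real.sq_sqrt (by linarith)
  set P := (1+s)/4 with hPdef
  have hP2 : (1/2 : ℝ) < P := by rw [hPdef]; linarith
  -- the "bad set" is empty
  set q : ℝ → ℝ := fun t => f t - P * t with hq
  have hqc : ContinuousOn q (Icc 0 1) :=
    hf.sub ((continuous_const.mul continuous_id).continuousOn)
  set B := Icc (0:ℝ) 1 ∩ q ⁻¹' (Iic 0) with hB
  have hBclosed : IsClosed B := hqc.preimage_isClosed_of_isClosed isClosed_Icc isClosed_Iic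
  have hq0 : q 0 = 1/2 := by rw [hq]; simp [hf0]
  have hBempty : B = ∅ := by
    by_contra hne
    have hBne : B.Nonempty := nonempty_iff_ne_empty.mpr (fun h => hne h)
    have hBbdd : BddBelow B := ⟨0, fun x hx => hx.1.1⟩
    set r₀ := sInf B with hr₀def
    have hr₀B : r₀ ∈ B := hBclosed.csInf_mem hBne hBbdd
    have hr₀Icc : r₀ ∈ Icc (0:ℝ) 1 := hr₀B.1
    have hr₀q : q r₀ ≤ 0 := hr₀B.2
    have hr₀0 : 0 < r₀ := by
      rcases hr₀Icc.1.lt_or_eq with h | h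
      · exact h
      · exfalso; rw [← h] at hr₀q; rw [hq0] at hr₀q; linarith
    have hr₀1 : r₀ ∈ Ioc (0:ℝ) 1 := ⟨hr₀0, hr₀Icc.2⟩
    have hpos : ∀ t ∈ Ioo (0:ℝ) r₀, P < f t / t := by
      intro t ht
      have htB : t ∉ B := fun h => absurd (csInf_le hBbdd h) (not_le.mpr ht.2)
      have htIcc : t ∈ Icc (0:ℝ) 1 := ⟨ht.1.le, ht.2.le.trans hr₀Icc.2⟩
      have hqt : 0 < q t := not_le.mp (fun h : q t ≤ 0 => htB ⟨htIcc, h⟩)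
      have hqt' : 0 < f t - P * t := hqt
      rw [lt_div_iff₀ ht.1]
      linarith
    have heq := solution_eq c s hc hs hsc f hf hf0 hder r₀ hr₀1 hpos
    -- f r₀ / r₀ = P
    have hfr₀ : f r₀ / r₀ = P := by
      have hge : 0 ≤ q r₀ := by
        set l := 𝓝[Ioo (0:ℝ) r₀] r₀ with hl
        have hlne : l.NeBot := by
          rw [hl]
          apply mem_closure_iff_nhdsWithin_neBot.mp
          rw [closure_Ioo hr₀0.ne]
          exact ⟨hr₀0.le, le_refl _⟩
        have hql : Tendsto q l (𝓝 (q r₀)) := by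
          have := (hqc r₀ hr₀Icc).tendsto
          exact this.mono_left (nhdsWithin_mono _
            (fun z hz => ⟨hz.1.le, hz.2.le.trans hr₀Icc.2⟩))
        refine ge_of_tendsto hql ?_
        filter_upwards [self_mem_nhdsWithin] with t ht
        have htB : t ∉ B := fun h => absurd (csInf_le hBbdd h) (not_le.mpr ht.2)
        have htIcc : t ∈ Icc (0:ℝ) 1 := ⟨ht.1.le, ht.2.le.trans hr₀Icc.2⟩
        have hqt : 0 < q t := not_le.mp (fun h : q t ≤ 0 => htB ⟨htIcc, h⟩)
        exact le_of_lt hqt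
      have hq0' : q r₀ = 0 := le_antisymm hr₀q hge
      have hq0'' : f r₀ - P * r₀ = 0 := hq0'
      field_simp
      linarith
    -- pick γ with Fc s γ ≥ 1
    obtain ⟨γ, hγ1, hγP⟩ : ∃ γ, 1 ≤ Fc s γ ∧ P < γ := by
      have := (Fc_tendsto_atTop hs).eventually (eventually_ge_atTop 1)
      have h2 := this.and self_mem_nhdsWithin
      exact h2.exists.imp (fun γ hγ => ⟨hγ.1, hγ.2⟩)
    -- G t > γ for t ∈ Ioo 0 r₀
    have hGγ : ∀ t ∈ Ioo (0:ℝ) r₀, γ < f t / t := by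
      intro t ht
      have h1 : Fc s (f t / t) = t := heq t ht
      have h2 : Fc s (f t / t) < Fc s γ := by
        rw [h1]; exact lt_of_lt_of_le (lt_of_lt_of_le ht.2 hr₀Icc.2) hγ1
      rcases lt_trichotomy γ (f t / t) with h | h | h
      · exact h
      · exfalso; rw [h] at h2; exact lt_irrefl _ h2
      · exfalso
        have := Fc_strictAntiOn hs (hpos t ht) hγP h
        exact lt_asymm h2 this
    -- but G t → P < γ at r₀
    set l := 𝓝[Ioo (0:ℝ) r₀] r₀ with hl
    have hlne : l.NeBot := by
      rw [hl]
      apply mem_closure_iff_nhdsWithin_neBot.mp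
      rw [closure_Ioo hr₀0.ne]
      exact ⟨hr₀0.le, le_refl _⟩
    have hGl : Tendsto (fun t => f t / t) l (𝓝 P) := by
      have hfc : Tendsto f l (𝓝 (f r₀)) :=
        (hf r₀ hr₀Icc).tendsto.mono_left (nhdsWithin_mono _
          (fun z hz => ⟨hz.1.le, hz.2.le.trans hr₀Icc.2⟩))
      have hid : Tendsto (fun t : ℝ => t) l (𝓝 r₀) :=
        tendsto_id.mono_left nhdsWithin_le_nhds
      have := hfc.div hid hr₀0.ne'
      rwa [hfr₀] at this
    have hev := (hGl.eventually_lt_const hγP).and self_mem_nhdsWithin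
    obtain ⟨t, ht1, ht2⟩ := hev.exists
    exact lt_asymm ht1 (hGγ t ht2)
  -- positivity on all of (0,1]
  have hpos : ∀ t ∈ Ioc (0:ℝ) 1, P < f t / t := by
    intro t ht
    have htIcc : t ∈ Icc (0:ℝ) 1 := ⟨ht.1.le, ht.2⟩
    have htB : t ∉ B := by rw [hBempty]; exact notMem_empty t
    have hqt : 0 < q t := not_le.mp (fun h : q t ≤ 0 => htB ⟨htIcc, h⟩)
    have hqt' : 0 < f t - P * t := hqt
    rw [lt_div_iff₀ ht.1]
    linarith
  have heq := solution_eq c s hc hs hsc f hf hf0 hder 1 ⟨one_pos, le_refl 1⟩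
    (fun t ht => hpos t ⟨ht.1, ht.2.le⟩)
  -- value at 1 by continuity
  have heq1 : Fc s (f 1 / 1) = 1 := by
    set l := 𝓝[Ioo (0:ℝ) 1] (1:ℝ) with hl
    have hlne : l.NeBot := by
      rw [hl]
      apply mem_closure_iff_nhdsWithin_neBot.mp
      rw [closure_Ioo (zero_ne_one : (0:ℝ) ≠ 1)]
      exact ⟨zero_le_one, le_refl _⟩
    have h1Icc : (1:ℝ) ∈ Icc (0:ℝ) 1 := ⟨zero_le_one, le_refl _⟩
    have hGl : Tendsto (fun t => f t / t) l (𝓝 (f 1 / 1)) := by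
      have hfc : Tendsto f l (𝓝 (f 1)) :=
        (hf 1 h1Icc).tendsto.mono_left (nhdsWithin_mono _ (fun z hz => ⟨hz.1.le, hz.2.le⟩))
      have hid : Tendsto (fun t : ℝ => t) l (𝓝 1) := tendsto_id.mono_left nhdsWithin_le_nhds
      exact hfc.div hid one_ne_zero
    have hFcont : ContinuousAt (Fc s) (f 1 / 1) :=
      (Fc_hasDerivAt hs (hpos 1 ⟨one_pos, le_refl 1⟩)).continuousAt
    have hcomp : Tendsto (fun t => Fc s (f t / t)) l (𝓝 (Fc s (f 1 / 1))) :=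
      hFcont.tendsto.comp hGl
    have hid : Tendsto (fun t => Fc s (f t / t)) l (𝓝 1) := by
      have : Tendsto (fun t : ℝ => t) l (𝓝 1) := tendsto_id.mono_left nhdsWithin_le_nhds
      refine this.congr' ?_
      filter_upwards [self_mem_nhdsWithin] with t ht
      exact (heq t ht).symm
    exact tendsto_nhds_unique hcomp hid
  -- conclude
  intro r hr
  refine ⟨hpos r hr, ?_, ?_⟩
  · show Fc s (f r / r) = r
    rcases hr.2.lt_or_eq with h | h
    · exact heq r ⟨hr.1, h⟩
    · rw [h]; exact heq1
  · intro g hgP hgeq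
    have h1 : Fc s g = r := hgeq
    have h2 : Fc s (f r / r) = r := by
      rcases hr.2.lt_or_eq with h | h
      · exact heq r ⟨hr.1, h⟩
      · rw [h]; exact heq1
    exact (Fc_strictAntiOn hs).injOn hgP (hpos r hr) (h1.trans h2.symm)
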